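/- The grafting product on the vector space spanned by non-planar rooted trees, where τ₁ ↷ τ₂ is the sum over all ways of attaching an edge from a vertex of τ₂ to the root of τ₁, satisfies the left pre-Lie identity. -/

import Mathlib

/-- Rooted trees, presented with an (auxiliary) ordered list of subtrees. -/
inductive RTree : Type where
  | node : List RTree → RTree

mutual
/-- All ways of attaching an edge from a vertex of the second tree to the root of the
first tree (with multiplicity, one term per vertex of the second tree). -/
def RTree.graftT (s : RTree) : RTree → List RTree
  | .node l => RTree.node (s :: l) :: (RTree.graftF s l).map RTree.node
def RTree.graftF (s : RTree) : List RTree → List (List RTree)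
  | [] => []
  | t :: ts => ((RTree.graftT s t).map (· :: ts)) ++ ((RTree.graftF s ts).map (t :: ·))
end

/-- Equivalence of ordered trees up to reordering of subtrees everywhere, i.e. equality
as non-planar rooted trees (graph isomorphism fixing the root); approximated at
recursion depth `n`. -/
def treeEquivN : ℕ → RTree → RTree → Prop
  | 0, _, _ => False
  | n + 1, .node l₁, .node l₂ => ∃ l, List.Forall₂ (treeEquivN n) l₁ l ∧ l.Perm l₂

/-- Two ordered trees represent the same non-planar rooted tree. -/
def TreeEquiv (t₁ t₂ : RTree) : Prop := ∃ n, treeEquivN n t₁ t₂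

/-- The set 𝒯 of non-planar rooted trees. -/
def NPTree : Type := Quot TreeEquiv

/-- Grafting `τ₁ ↷ τ₂` of non-planar rooted trees, as an element of the free vector
space 𝒯 over the non-planar rooted trees. -/
noncomputable def graftNP {K : Type*} [Field K] (x y : NPTree) : NPTree →₀ K :=
  ((RTree.graftT (Quot.out x) (Quot.out y)).map
    (fun s => Finsupp.single (Quot.mk TreeEquiv s) (1 : K))).sum

/-- The bilinear extension of grafting to the free vector space 𝒯. -/
noncomputable def graftL {K : Type*} [Field K] (x y : NPTree →₀ K) : NPTree →₀ K :=
  x.sum fun t₁ c₁ => y.sum fun t₂ c₂ => (c₁ * c₂) • graftNP t₁ t₂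

open Multiset List

/-- Bridge between `Multiset.Rel` on coercions and the `∃ l, Forall₂ ∧ Perm` form. -/
theorem rel_coe_iff {α β : Type*} (r : α → β → Prop) :
    ∀ (l₁ : List α) (l₂ : List β),
      Multiset.Rel r ↑l₁ ↑l₂ ↔ ∃ l, List.Forall₂ r l₁ l ∧ l.Perm l₂ := by
  intro l₁
  induction l₁ with
  | nil =>
    intro l₂
    constructor
    · intro h
      rw [show ((↑([] : List α) : Multiset α)) = 0 from rfl, Multiset.rel_zero_left] at h
      have : l₂ = [] := by
        have := h
        rwa [← Multiset.coe_nil, Multiset.coe_eq_coe, List.perm_nil] at this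
      exact ⟨[], by simp [this]⟩
    · rintro ⟨l, hf, hp⟩
      cases hf
      have : l₂ = [] := hp.symm.eq_nil
      simp [this]
  | cons a as ih =>
    intro l₂
    constructor
    · intro h
      rw [show ((↑(a :: as) : Multiset α)) = a ::ₘ ↑as from (Multiset.cons_coe a as).symm,
        Multiset.rel_cons_left] at h
      obtain ⟨b, bs, hab, hrel, heq⟩ := h
      obtain ⟨m, rfl⟩ := Quot.exists_rep bs
      obtain ⟨l, hf, hp⟩ := (ih m).mp hrel
      refine ⟨b :: l, List.Forall₂.cons hab hf, ?_⟩
      have hlm : (↑l : Multiset β) = ↑m := Multiset.coe_eq_coe.mpr hp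
      rw [← Multiset.coe_eq_coe, heq, ← Multiset.cons_coe, hlm]
      rfl
    · rintro ⟨l, hf, hp⟩
      cases hf with
      | cons hab hf =>
        rename_i b bs
        have h1 : Multiset.Rel r ↑as ↑bs := (ih bs).mpr ⟨bs, hf, List.Perm.refl _⟩
        have h2 : Multiset.Rel r ↑(a :: as) ↑(b :: bs) := by
          rw [← Multiset.cons_coe, ← Multiset.cons_coe]
          exact Multiset.Rel.cons hab h1
        rwa [show ((↑(b :: bs) : Multiset β)) = ↑l₂ from Multiset.coe_eq_coe.mpr hp] at h2

/-- `treeEquivN` is monotone in the depth parameter. -/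
theorem treeEquivN_succ : ∀ n (t₁ t₂ : RTree), treeEquivN n t₁ t₂ → treeEquivN (n + 1) t₁ t₂ := by
  intro n
  induction n with
  | zero => intro t₁ t₂ h; exact absurd h (by simp [treeEquivN])
  | succ n ih =>
    rintro ⟨l₁⟩ ⟨l₂⟩ ⟨l, hf, hp⟩
    exact ⟨l, hf.imp (fun {a b} h => ih a b h), hp⟩

theorem treeEquivN_mono {m n : ℕ} (h : m ≤ n) {t₁ t₂ : RTree} :
    treeEquivN m t₁ t₂ → treeEquivN n t₁ t₂ := by
  induction n with
  | zero => intro hh; rwa [Nat.le_zero.mp h] at hh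
  | succ n ih =>
    intro hh
    rcases Nat.lt_or_ge m (n+1) with h' | h'
    · exact treeEquivN_succ n _ _ (ih (Nat.lt_succ_iff.mp h') hh)
    · have : m = n + 1 := le_antisymm h h'
      rwa [this] at hh

mutual
theorem treeEquiv_refl : ∀ (t : RTree), ∃ n, treeEquivN n t t
  | .node l => by
    obtain ⟨n, hn⟩ := treeEquivF_refl l
    exact ⟨n + 1, ⟨l, List.forall₂_same.mpr hn, List.Perm.refl l⟩⟩
theorem treeEquivF_refl : ∀ (l : List RTree), ∃ n, ∀ u ∈ l, treeEquivN n u u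
  | [] => ⟨0, by simp⟩
  | t :: ts => by
    obtain ⟨n, hn⟩ := treeEquiv_refl t
    obtain ⟨m, hm⟩ := treeEquivF_refl ts
    refine ⟨max n m, ?_⟩
    intro u hu
    rcases List.mem_cons.mp hu with rfl | hu
    · exact treeEquivN_mono (le_max_left n m) hn
    · exact treeEquivN_mono (le_max_right n m) (hm u hu)
end

theorem TreeEquiv.refl (t : RTree) : TreeEquiv t t := treeEquiv_refl t

/-- Uniformize the depth in a `Forall₂ TreeEquiv`. -/
theorem forall₂_treeEquiv_uniform : ∀ {l₁ l₂ : List RTree}, List.Forall₂ TreeEquiv l₁ l₂ →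
    ∃ n, List.Forall₂ (treeEquivN n) l₁ l₂ := by
  intro l₁ l₂ h
  induction h with
  | nil => exact ⟨0, List.Forall₂.nil⟩
  | cons h _ ih =>
    obtain ⟨n, hn⟩ := h
    obtain ⟨m, hm⟩ := ih
    exact ⟨max n m, List.Forall₂.cons (treeEquivN_mono (le_max_left n m) hn)
      (hm.imp fun {a b} hh => treeEquivN_mono (le_max_right n m) hh)⟩

theorem treeEquivN_le_treeEquiv {n : ℕ} {t₁ t₂ : RTree} (h : treeEquivN n t₁ t₂) :
    TreeEquiv t₁ t₂ := ⟨n, h⟩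

/-- The key characterization: two nodes are equivalent iff their children lists are
related as multisets. -/
theorem nodeEquiv_iff {l₁ l₂ : List RTree} :
    TreeEquiv (.node l₁) (.node l₂) ↔ Multiset.Rel TreeEquiv ↑l₁ ↑l₂ := by
  constructor
  · rintro ⟨n, h⟩
    cases n with
    | zero => exact absurd h (by simp [treeEquivN])
    | succ n =>
      obtain ⟨l, hf, hp⟩ := h
      exact (rel_coe_iff TreeEquiv l₁ l₂).mpr ⟨l, hf.imp fun {a b} h => treeEquivN_le_treeEquiv h, hp⟩
  · intro h
    obtain ⟨l, hf, hp⟩ := (rel_coe_iff TreeEquiv l₁ l₂).mp h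
    obtain ⟨n, hn⟩ := forall₂_treeEquiv_uniform hf
    exact ⟨n + 1, ⟨l, hn, hp⟩⟩

theorem treeEquivN_symm : ∀ n {t₁ t₂ : RTree}, treeEquivN n t₁ t₂ → treeEquivN n t₂ t₁ := by
  intro n
  induction n with
  | zero => intro t₁ t₂ h; exact absurd h (by simp [treeEquivN])
  | succ n ih =>
    rintro ⟨l₁⟩ ⟨l₂⟩ ⟨l, hf, hp⟩
    have h1 : Multiset.Rel (treeEquivN n) ↑l₁ ↑l₂ := by
      have := (rel_coe_iff (treeEquivN n) l₁ l).mpr ⟨l, hf, List.Perm.refl l⟩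
      rwa [Multiset.coe_eq_coe.mpr hp] at this
    have h2 : Multiset.Rel (treeEquivN n) ↑l₂ ↑l₁ := by
      rw [← Multiset.rel_flip]
      exact h1.mono fun a _ b _ h => ih h
    obtain ⟨l', hf', hp'⟩ := (rel_coe_iff (treeEquivN n) l₂ l₁).mp h2
    exact ⟨l', hf', hp'⟩

theorem treeEquivN_trans : ∀ n {t₁ t₂ t₃ : RTree},
    treeEquivN n t₁ t₂ → treeEquivN n t₂ t₃ → treeEquivN n t₁ t₃ := by
  intro n
  induction n with
  | zero => intro t₁ t₂ t₃ h; exact absurd h (by simp [treeEquivN])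
  | succ n ih =>
    rintro ⟨l₁⟩ ⟨l₂⟩ ⟨l₃⟩ ⟨l, hf, hp⟩ ⟨l', hf', hp'⟩
    have h1 : Multiset.Rel (treeEquivN n) ↑l₁ ↑l₂ := by
      have := (rel_coe_iff (treeEquivN n) l₁ l).mpr ⟨l, hf, List.Perm.refl l⟩
      rwa [Multiset.coe_eq_coe.mpr hp] at this
    have h2 : Multiset.Rel (treeEquivN n) ↑l₂ ↑l₃ := by
      have := (rel_coe_iff (treeEquivN n) l₂ l').mpr ⟨l', hf', List.Perm.refl l'⟩
      rwa [Multiset.coe_eq_coe.mpr hp'] at this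
    haveI : IsTrans RTree (treeEquivN n) := ⟨fun _ _ _ => ih⟩
    exact (rel_coe_iff (treeEquivN n) l₁ l₃).mp (Multiset.Rel.trans _ h1 h2)

theorem TreeEquiv.symm {t₁ t₂ : RTree} (h : TreeEquiv t₁ t₂) : TreeEquiv t₂ t₁ := by
  obtain ⟨n, h⟩ := h; exact ⟨n, treeEquivN_symm n h⟩

theorem TreeEquiv.trans {t₁ t₂ t₃ : RTree} (h : TreeEquiv t₁ t₂) (h' : TreeEquiv t₂ t₃) :
    TreeEquiv t₁ t₃ := by
  obtain ⟨n, h⟩ := h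
  obtain ⟨m, h'⟩ := h'
  exact ⟨max n m, treeEquivN_trans _ (treeEquivN_mono (le_max_left n m) h)
    (treeEquivN_mono (le_max_right n m) h')⟩

theorem treeEquiv_equivalence : Equivalence TreeEquiv :=
  ⟨TreeEquiv.refl, TreeEquiv.symm, TreeEquiv.trans⟩

instance : IsTrans RTree TreeEquiv := ⟨fun _ _ _ => TreeEquiv.trans⟩

/-! ### Grafting at the multiset level -/

/-- Grafting into a tree, as a multiset. -/
def GT (s t : RTree) : Multiset RTree := ↑(RTree.graftT s t)

/-- Grafting into a forest, as a multiset. -/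
def GF (s : RTree) (l : List RTree) : Multiset (List RTree) := ↑(RTree.graftF s l)

theorem GT_node (s : RTree) (l : List RTree) :
    GT s (.node l) = RTree.node (s :: l) ::ₘ (GF s l).map RTree.node := by
  show ((RTree.graftT s (.node l) : List RTree) : Multiset RTree) = _
  rw [RTree.graftT]
  rw [← Multiset.cons_coe, GF, Multiset.map_coe]

theorem GF_nil (s : RTree) : GF s [] = 0 := rfl

theorem GF_cons (s t : RTree) (ts : List RTree) :
    GF s (t :: ts) = (GT s t).map (· :: ts) + (GF s ts).map (t :: ·) := by
  show ((RTree.graftF s (t :: ts) : List (List RTree)) : Multiset (List RTree)) = _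
  rw [RTree.graftF, ← Multiset.coe_add, GT, GF, Multiset.map_coe, Multiset.map_coe]

/-- Relation on children lists: same multiset of trees up to `TreeEquiv`. -/
def ListEquiv (l₁ l₂ : List RTree) : Prop := Multiset.Rel TreeEquiv ↑l₁ ↑l₂

theorem ListEquiv.refl (l : List RTree) : ListEquiv l l :=
  Multiset.rel_refl_of_refl_on fun x _ => TreeEquiv.refl x

theorem ListEquiv.trans {l₁ l₂ l₃ : List RTree} (h : ListEquiv l₁ l₂) (h' : ListEquiv l₂ l₃) :
    ListEquiv l₁ l₃ := Multiset.Rel.trans _ h h'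

instance : IsTrans (List RTree) ListEquiv := ⟨fun _ _ _ => ListEquiv.trans⟩

theorem ListEquiv.cons {a b : RTree} {l₁ l₂ : List RTree} (h : TreeEquiv a b)
    (h' : ListEquiv l₁ l₂) : ListEquiv (a :: l₁) (b :: l₂) := by
  unfold ListEquiv
  rw [← Multiset.cons_coe, ← Multiset.cons_coe]
  exact Multiset.Rel.cons h h'

theorem ListEquiv.of_perm {l₁ l₂ : List RTree} (h : l₁.Perm l₂) : ListEquiv l₁ l₂ := by
  unfold ListEquiv
  rw [Multiset.coe_eq_coe.mpr h]
  exact ListEquiv.refl l₂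

theorem node_congr {l₁ l₂ : List RTree} (h : ListEquiv l₁ l₂) :
    TreeEquiv (.node l₁) (.node l₂) := nodeEquiv_iff.mpr h

/-! ### Congruence of grafting in the grafted tree -/

mutual
theorem congS_T {s s' : RTree} (h : TreeEquiv s s') :
    ∀ t : RTree, Multiset.Rel TreeEquiv (GT s t) (GT s' t)
  | .node l => by
    rw [GT_node, GT_node]
    refine Multiset.Rel.cons (node_congr (ListEquiv.cons h (ListEquiv.refl l))) ?_
    rw [Multiset.rel_map]
    exact (congS_F h l).mono fun a _ b _ hab => node_congr hab
theorem congS_F {s s' : RTree} (h : TreeEquiv s s') :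
    ∀ l : List RTree, Multiset.Rel ListEquiv (GF s l) (GF s' l)
  | [] => by rw [GF_nil, GF_nil]; exact Multiset.rel_zero_left.mpr rfl
  | t :: ts => by
    rw [GF_cons, GF_cons]
    refine Multiset.Rel.add ?_ ?_
    · rw [Multiset.rel_map]
      exact (congS_T h t).mono fun a _ b _ hab => ListEquiv.cons hab (ListEquiv.refl ts)
    · rw [Multiset.rel_map]
      exact (congS_F h ts).mono fun a _ b _ hab => ListEquiv.cons (TreeEquiv.refl t) hab
end

/-! ### Congruence of grafting in the host tree -/

/-- Grafting into permuted forests gives related results. -/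
theorem congT_Fperm (s : RTree) : ∀ {l₁ l₂ : List RTree}, l₁.Perm l₂ →
    Multiset.Rel ListEquiv (GF s l₁) (GF s l₂) := by
  intro l₁ l₂ h
  induction h with
  | nil => rw [GF_nil]; exact Multiset.rel_zero_left.mpr rfl
  | cons t h ih =>
    rename_i l₁' l₂'
    rw [GF_cons, GF_cons]
    refine Multiset.Rel.add ?_ ?_
    · rw [Multiset.rel_map]
      refine Multiset.rel_refl_of_refl_on fun x _ => ?_
      exact ListEquiv.cons (TreeEquiv.refl x) (ListEquiv.of_perm h)
    · rw [Multiset.rel_map]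
      exact ih.mono fun a _ b _ hab => ListEquiv.cons (TreeEquiv.refl t) hab
  | swap a b l =>
    rw [GF_cons, GF_cons, GF_cons, GF_cons, Multiset.map_add, Multiset.map_add]
    rw [show ∀ x y z : Multiset (List RTree), x + (y + z) = y + (x + z) from
      fun x y z => by rw [← add_assoc, add_comm x y, add_assoc]]
    refine Multiset.Rel.add ?_ (Multiset.Rel.add ?_ ?_)
    · rw [Multiset.map_map, Multiset.rel_map]
      refine Multiset.rel_refl_of_refl_on fun x _ => ?_
      exact ListEquiv.of_perm (List.Perm.swap x b l)
    · rw [Multiset.map_map, Multiset.rel_map]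
      refine Multiset.rel_refl_of_refl_on fun x _ => ?_
      exact ListEquiv.of_perm (List.Perm.swap x a l).symm
    · rw [Multiset.map_map, Multiset.map_map, Multiset.rel_map]
      refine Multiset.rel_refl_of_refl_on fun x _ => ?_
      exact ListEquiv.of_perm (List.Perm.swap a b x)
  | trans _ _ ih₁ ih₂ => exact Multiset.Rel.trans _ ih₁ ih₂

/-- Grafting congruence in the host, at bounded depth. -/
theorem congT_T : ∀ n, (∀ {t t' : RTree}, treeEquivN n t t' →
    ∀ s, Multiset.Rel TreeEquiv (GT s t) (GT s t')) := by
  intro n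
  induction n with
  | zero => intro t t' h; exact absurd h (by simp [treeEquivN])
  | succ n ih =>
    have congF : ∀ {l₁ l₂ : List RTree}, List.Forall₂ (treeEquivN n) l₁ l₂ →
        ∀ s, Multiset.Rel ListEquiv (GF s l₁) (GF s l₂) := by
      intro l₁ l₂ h
      induction h with
      | nil => intro s; rw [GF_nil]; exact Multiset.rel_zero_left.mpr rfl
      | cons hab hf ihf =>
        rename_i a b as bs
        intro s
        rw [GF_cons, GF_cons]
        refine Multiset.Rel.add ?_ ?_
        · rw [Multiset.rel_map]
          have hl : ListEquiv as bs :=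
            (rel_coe_iff TreeEquiv as bs).mpr
              ⟨bs, hf.imp fun {a b} h => treeEquivN_le_treeEquiv h, List.Perm.refl bs⟩
          exact (ih hab s).mono fun x _ y _ hxy => ListEquiv.cons hxy hl
        · rw [Multiset.rel_map]
          exact (ihf s).mono fun x _ y _ hxy => ListEquiv.cons (treeEquivN_le_treeEquiv hab) hxy
    rintro ⟨l₁⟩ ⟨l₂⟩ ⟨l, hf, hp⟩ s
    rw [GT_node, GT_node]
    have hE : ListEquiv l₁ l₂ := by
      refine ListEquiv.trans ?_ (ListEquiv.of_perm hp)
      exact (rel_coe_iff TreeEquiv l₁ l).mpr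
        ⟨l, hf.imp fun {a b} h => treeEquivN_le_treeEquiv h, List.Perm.refl l⟩
    refine Multiset.Rel.cons (node_congr (ListEquiv.cons (TreeEquiv.refl s) hE)) ?_
    have h1 : Multiset.Rel ListEquiv (GF s l₁) (GF s l) := congF hf s
    have h2 : Multiset.Rel ListEquiv (GF s l) (GF s l₂) := congT_Fperm s hp
    rw [Multiset.rel_map]
    exact (Multiset.Rel.trans _ h1 h2).mono fun a _ b _ hab => node_congr hab

/-- Full congruence of grafting. -/
theorem graft_congr {s s' t t' : RTree} (hs : TreeEquiv s s') (ht : TreeEquiv t t') :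
    Multiset.Rel TreeEquiv (GT s t) (GT s' t') := by
  obtain ⟨n, hn⟩ := ht
  exact Multiset.Rel.trans _ (congS_T hs t) (congT_T n hn s')

theorem bind_map_swap {α β γ : Type*} (m : Multiset α) (n : Multiset β) (f : α → β → γ) :
    (m.bind fun a => n.map (f a)) = n.bind fun b => m.map fun a => f a b := by
  have h1 : (m.bind fun a => n.map (f a)) = m.bind fun a => n.bind fun b => {f a b} := by
    simp only [Multiset.bind_singleton]
  have h2 : (n.bind fun b => m.map fun a => f a b) = n.bind fun b => m.bind fun a => {f a b} := by
    simp only [Multiset.bind_singleton]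
  rw [h1, h2, Multiset.bind_bind]

theorem rel_of_eq_T {s t : Multiset RTree} (h : s = t) : Multiset.Rel TreeEquiv s t :=
  h ▸ Multiset.rel_refl_of_refl_on fun x _ => TreeEquiv.refl x

theorem rel_of_eq_L {s t : Multiset (List RTree)} (h : s = t) : Multiset.Rel ListEquiv s t :=
  h ▸ Multiset.rel_refl_of_refl_on fun x _ => ListEquiv.refl x

theorem rel_rearrange {α : Type*} {r : α → α → Prop} {a a' b b' : Multiset α}
    (ha : a = a') (hb : b = b') (h : Multiset.Rel r a' b') : Multiset.Rel r a b :=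
  ha ▸ hb ▸ h

theorem rel_singleton {α : Type*} {r : α → α → Prop} {a b : α} (h : r a b) :
    Multiset.Rel r {a} {b} :=
  Multiset.Rel.cons h (Multiset.rel_zero_left.mpr rfl)

mutual
theorem preLieT (x y : RTree) : ∀ t : RTree, Multiset.Rel TreeEquiv
    ((GT y t).bind (GT x) + (GT y x).bind (fun w => GT w t))
    ((GT x t).bind (GT y) + (GT x y).bind (fun w => GT w t))
  | .node l => by
    have hF := preLieF x y l
    simp only [GT_node, GF_cons, Multiset.cons_bind, Multiset.bind_map, Multiset.map_add,
      Multiset.map_map, Multiset.bind_cons, ← Multiset.map_bind, Function.comp_def]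
    rw [← Multiset.singleton_add]
    rw [← Multiset.singleton_add]
    refine rel_rearrange
      (show _ = ({RTree.node (x :: y :: l)}
          + Multiset.map RTree.node
            ((GF y l).bind (GF x) + ((GT y x).bind fun a => GF a l)))
          + (Multiset.map (fun a => RTree.node (a :: l)) (GT x y)
            + Multiset.map (fun a => RTree.node (y :: a)) (GF x l)
            + Multiset.map (fun a => RTree.node (x :: a)) (GF y l)
            + Multiset.map (fun a => RTree.node (a :: l)) (GT y x)) by
        rw [Multiset.map_add]; abel)
      (show _ = ({RTree.node (y :: x :: l)}
          + Multiset.map RTree.node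
            ((GF x l).bind (GF y) + ((GT x y).bind fun a => GF a l)))
          + (Multiset.map (fun a => RTree.node (a :: l)) (GT x y)
            + Multiset.map (fun a => RTree.node (y :: a)) (GF x l)
            + Multiset.map (fun a => RTree.node (x :: a)) (GF y l)
            + Multiset.map (fun a => RTree.node (a :: l)) (GT y x)) by
        rw [Multiset.map_add]; abel)
      ?_
    refine Multiset.Rel.add (Multiset.Rel.add ?_ ?_) (rel_of_eq_T rfl)
    · exact rel_singleton (node_congr (ListEquiv.of_perm (List.Perm.swap y x (l))))
    · rw [Multiset.rel_map]
      exact hF.mono fun a _ b _ hab => node_congr hab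
theorem preLieF (x y : RTree) : ∀ l : List RTree, Multiset.Rel ListEquiv
    ((GF y l).bind (GF x) + (GT y x).bind (fun w => GF w l))
    ((GF x l).bind (GF y) + (GT x y).bind (fun w => GF w l))
  | [] => by
    simp only [GF_nil, Multiset.zero_bind, Multiset.bind_zero, add_zero]
    exact Multiset.rel_zero_left.mpr rfl
  | t :: ts => by
    have hT := preLieT x y t
    have hF := preLieF x y ts
    simp only [GF_cons, GT_node, Multiset.add_bind, Multiset.bind_map, Multiset.bind_add,
      Multiset.map_add, Multiset.map_map, ← Multiset.map_bind, Function.comp_def]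
    refine rel_rearrange
      (show _ = (Multiset.map (fun u => u :: ts)
            ((GT y t).bind (GT x) + ((GT y x).bind fun a => GT a t))
          + Multiset.map (fun u => t :: u)
            ((GF y ts).bind (GF x) + ((GT y x).bind fun a => GF a ts)))
          + ((GT y t).bind fun a => Multiset.map (fun u => a :: u) (GF x ts))
          + ((GF y ts).bind fun a => Multiset.map (fun u => u :: a) (GT x t)) by
        rw [Multiset.map_add, Multiset.map_add]; abel)
      (show _ = (Multiset.map (fun u => u :: ts)
            ((GT x t).bind (GT y) + ((GT x y).bind fun a => GT a t))
          + Multiset.map (fun u => t :: u)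
            ((GF x ts).bind (GF y) + ((GT x y).bind fun a => GF a ts)))
          + ((GF x ts).bind fun a => Multiset.map (fun u => u :: a) (GT y t))
          + ((GT x t).bind fun a => Multiset.map (fun u => a :: u) (GF y ts)) by
        rw [Multiset.map_add, Multiset.map_add]; abel)
      ?_
    refine Multiset.Rel.add (Multiset.Rel.add (Multiset.Rel.add ?_ ?_) ?_) ?_
    · rw [Multiset.rel_map]
      exact hT.mono fun a _ b _ hab => ListEquiv.cons hab (ListEquiv.refl ts)
    · rw [Multiset.rel_map]
      exact hF.mono fun a _ b _ hab => ListEquiv.cons (TreeEquiv.refl t) hab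
    · exact rel_of_eq_L (bind_map_swap (GT y t) (GF x ts) (fun a u => a :: u))
    · exact rel_of_eq_L ((bind_map_swap (GT x t) (GF y ts) (fun a u => a :: u)).symm)
end


section FS
variable {K : Type*} [Field K]

/-- Sum of basis vectors indexed by a multiset of trees. -/
noncomputable def LS (m : Multiset RTree) : NPTree →₀ K :=
  (m.map fun s => Finsupp.single (Quot.mk TreeEquiv s) (1 : K)).sum

theorem LS_congr {m₁ m₂ : Multiset RTree} (h : Multiset.Rel TreeEquiv m₁ m₂) :
    LS (K := K) m₁ = LS m₂ := by
  unfold LS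
  have : m₁.map (fun s => Finsupp.single (Quot.mk TreeEquiv s) (1 : K))
      = m₂.map (fun s => Finsupp.single (Quot.mk TreeEquiv s) (1 : K)) := by
    refine Multiset.rel_eq.mp (Multiset.rel_map.mpr (h.mono fun a _ b _ hab => ?_))
    rw [Quot.sound hab]
  rw [this]

theorem LS_zero : LS (K := K) 0 = 0 := rfl

theorem LS_add (m n : Multiset RTree) : LS (K := K) (m + n) = LS m + LS n := by
  simp [LS]
  rfl

theorem LS_cons (t : RTree) (m : Multiset RTree) :
    LS (K := K) (t ::ₘ m)
      = (Finsupp.single (Quot.mk TreeEquiv t) 1 : NPTree →₀ K) + LS m := by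
  unfold LS; rw [Multiset.map_cons, Multiset.sum_cons]
  rfl

theorem out_equiv (t : RTree) : TreeEquiv (Quot.out (Quot.mk TreeEquiv t)) t :=
  treeEquiv_equivalence.eqvGen_iff.mp (Quot.eq.mp (Quot.out_eq (Quot.mk TreeEquiv t)))

theorem graftNP_mk (a b : RTree) :
    graftNP (K := K) (Quot.mk TreeEquiv a) (Quot.mk TreeEquiv b) = LS (GT a b) := by
  have h : Multiset.Rel TreeEquiv
      (GT (Quot.out (Quot.mk TreeEquiv a)) (Quot.out (Quot.mk TreeEquiv b))) (GT a b) :=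
    graft_congr (out_equiv a) (out_equiv b)
  rw [← LS_congr (K := K) h]
  simp [graftNP, LS, GT, Multiset.map_coe, Multiset.sum_coe]
  rfl

theorem graftL_single_single (a b : NPTree) (c₁ c₂ : K) :
    graftL (Finsupp.single a c₁) (Finsupp.single b c₂) = (c₁ * c₂) • graftNP a b := by
  unfold graftL
  rw [Finsupp.sum_single_index, Finsupp.sum_single_index]
  · simp
  · rw [Finsupp.sum_single_index] <;> simp

theorem graftL_zero_right (x : NPTree →₀ K) : graftL x 0 = 0 := by
  simp [graftL, Finsupp.sum_zero_index, Finsupp.sum, Finset.sum_const_zero]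

theorem graftL_zero_left (y : NPTree →₀ K) : graftL 0 y = 0 := by
  simp [graftL, Finsupp.sum_zero_index]

theorem graftL_add_left (x x' y : NPTree →₀ K) :
    graftL (x + x') y = graftL x y + graftL x' y := by
  unfold graftL
  rw [Finsupp.sum_add_index']
  · intro a; simp
  · intro a b₁ b₂
    rw [← Finsupp.sum_add]
    congr 1
    funext t₂ c₂
    rw [add_mul, add_smul]

theorem graftL_add_right (x y y' : NPTree →₀ K) :
    graftL x (y + y') = graftL x y + graftL x y' := by
  unfold graftL
  have h : ∀ (t₁ : NPTree) (c₁ : K),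
      ((y + y').sum fun t₂ c₂ => (c₁ * c₂) • graftNP t₁ t₂ : NPTree →₀ K)
        = (y.sum fun t₂ c₂ => (c₁ * c₂) • graftNP t₁ t₂)
          + (y'.sum fun t₂ c₂ => (c₁ * c₂) • graftNP t₁ t₂) := by
    intro t₁ c₁
    refine Finsupp.sum_add_index' (fun a => by simp) (fun a b₁ b₂ => ?_)
    rw [mul_add, add_smul]
  simp only [h, Finsupp.sum_add]

theorem graftL_LS_right (a : RTree) (m : Multiset RTree) :
    graftL (Finsupp.single (Quot.mk TreeEquiv a) (1 : K)) (LS m) = LS (m.bind (GT a)) := by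
  induction m using Multiset.induction with
  | empty => rw [LS_zero, graftL_zero_right, Multiset.zero_bind, LS_zero]
  | cons t m ih =>
    rw [LS_cons, graftL_add_right, ih, Multiset.cons_bind, LS_add]
    erw [graftL_single_single, graftNP_mk]
    norm_num

theorem graftL_LS_left (m : Multiset RTree) (c : RTree) :
    graftL (LS m) (Finsupp.single (Quot.mk TreeEquiv c) (1 : K))
      = LS (m.bind fun w => GT w c) := by
  induction m using Multiset.induction with
  | empty => rw [LS_zero, graftL_zero_left, Multiset.zero_bind, LS_zero]
  | cons t m ih =>
    rw [LS_cons, graftL_add_left, ih, Multiset.cons_bind, LS_add]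
    erw [graftL_single_single, graftNP_mk]
    norm_num

theorem graftL_smul_left (c : K) (x y : NPTree →₀ K) :
    graftL (c • x) y = c • graftL x y := by
  unfold graftL
  rw [Finsupp.sum_smul_index (fun a => by simp), Finsupp.smul_sum]
  congr 1
  funext t₁ c₁
  rw [Finsupp.smul_sum]
  congr 1
  funext t₂ c₂
  rw [mul_assoc]
  exact mul_smul c (c₁ * c₂) _

theorem graftL_smul_right (c : K) (x y : NPTree →₀ K) :
    graftL x (c • y) = c • graftL x y := by
  unfold graftL
  rw [Finsupp.smul_sum]
  congr 1
  funext t₁ c₁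
  rw [Finsupp.sum_smul_index (fun a => by simp), Finsupp.smul_sum]
  congr 1
  funext t₂ c₂
  rw [show c₁ * (c * c₂) = c * (c₁ * c₂) by ring]
  exact mul_smul c (c₁ * c₂) _

/-- The core identity on basis elements. -/
theorem core (a b c : RTree) :
    graftL (K := K) (Finsupp.single (Quot.mk TreeEquiv a) 1)
        (graftL (Finsupp.single (Quot.mk TreeEquiv b) 1) (Finsupp.single (Quot.mk TreeEquiv c) 1))
      - graftL (graftL (Finsupp.single (Quot.mk TreeEquiv a) 1)
          (Finsupp.single (Quot.mk TreeEquiv b) 1)) (Finsupp.single (Quot.mk TreeEquiv c) 1)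
      - graftL (Finsupp.single (Quot.mk TreeEquiv b) 1)
        (graftL (Finsupp.single (Quot.mk TreeEquiv a) 1) (Finsupp.single (Quot.mk TreeEquiv c) 1))
      + graftL (graftL (Finsupp.single (Quot.mk TreeEquiv b) 1)
          (Finsupp.single (Quot.mk TreeEquiv a) 1)) (Finsupp.single (Quot.mk TreeEquiv c) 1)
      = 0 := by
  have e1 : graftL (K := K) (Finsupp.single (Quot.mk TreeEquiv b) 1)
      (Finsupp.single (Quot.mk TreeEquiv c) 1) = LS (GT b c) := by
    erw [graftL_single_single, graftNP_mk]; norm_num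
  have e2 : graftL (K := K) (Finsupp.single (Quot.mk TreeEquiv a) 1)
      (Finsupp.single (Quot.mk TreeEquiv b) 1) = LS (GT a b) := by
    erw [graftL_single_single, graftNP_mk]; norm_num
  have e3 : graftL (K := K) (Finsupp.single (Quot.mk TreeEquiv a) 1)
      (Finsupp.single (Quot.mk TreeEquiv c) 1) = LS (GT a c) := by
    erw [graftL_single_single, graftNP_mk]; norm_num
  have e4 : graftL (K := K) (Finsupp.single (Quot.mk TreeEquiv b) 1)
      (Finsupp.single (Quot.mk TreeEquiv a) 1) = LS (GT b a) := by
    erw [graftL_single_single, graftNP_mk]; norm_num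
  rw [e1, e2, e3, e4, graftL_LS_right, graftL_LS_right, graftL_LS_left, graftL_LS_left]
  have key := LS_congr (K := K) (preLieT a b c)
  rw [LS_add, LS_add] at key
  -- key : LS ((GT b c).bind (GT a)) + LS ((GT b a).bind fun w => GT w c)
  --     = LS ((GT a c).bind (GT b)) + LS ((GT a b).bind fun w => GT w c)
  linear_combination (norm := abel) key

end FS


/-- The grafting product on the vector space spanned by non-planar rooted trees
satisfies the left pre-Lie identity. -/
theorem grafting_preLie {K : Type*} [Field K] [CharZero K] :
    ∀ x y z : NPTree →₀ K,
      graftL x (graftL y z) - graftL (graftL x y) z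
        - graftL y (graftL x z) + graftL (graftL y x) z = 0 := by
  intro x y z
  induction x using Finsupp.induction_linear with
  | zero => simp [graftL_zero_left, graftL_zero_right]
  | add f g hf hg =>
    simp only [graftL_add_left, graftL_add_right]
    have h := congrArg₂ HAdd.hAdd hf hg
    rw [add_zero] at h
    rw [← h]; abel
  | single a1 b1 =>
    induction y using Finsupp.induction_linear with
    | zero => simp [graftL_zero_left, graftL_zero_right]
    | add f g hf hg =>
      simp only [graftL_add_left, graftL_add_right]
      have h := congrArg₂ HAdd.hAdd hf hg
      rw [add_zero] at h
      rw [← h]; abel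
    | single a2 b2 =>
      induction z using Finsupp.induction_linear with
      | zero => simp [graftL_zero_left, graftL_zero_right]
      | add f g hf hg =>
        simp only [graftL_add_left, graftL_add_right]
        have h := congrArg₂ HAdd.hAdd hf hg
        rw [add_zero] at h
        rw [← h]; abel
      | single a3 b3 =>
        obtain ⟨ta, rfl⟩ := Quot.exists_rep a1
        obtain ⟨tb, rfl⟩ := Quot.exists_rep a2
        obtain ⟨tc, rfl⟩ := Quot.exists_rep a3
        have hc := core (K := K) ta tb tc
        erw [← Finsupp.smul_single_one (α := NPTree) (Quot.mk TreeEquiv ta) b1,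
          ← Finsupp.smul_single_one (α := NPTree) (Quot.mk TreeEquiv tb) b2,
          ← Finsupp.smul_single_one (α := NPTree) (Quot.mk TreeEquiv tc) b3]
        repeat first
          | rw [graftL_smul_left]
          | rw [graftL_smul_right]
        repeat rw [smul_smul]
        rw [show b1 * b3 * b2 = b1 * b2 * b3 by ring,
          show b2 * b1 * b3 = b1 * b2 * b3 by ring,
          show b2 * b3 * b1 = b1 * b2 * b3 by ring]
        erw [← smul_sub, ← smul_sub, ← smul_add, hc, smul_zero]
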